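/- For γ ∈ ℝ and a 2×2 complex matrix ρ with entries ρ₀₀, ρ₀₁, ρ₁₀, ρ₁₁, define F(γ)[ρ] to be the 2×2 matrix [[ρ₀₀ + γ·ρ₁₁, √(1−γ)·ρ₀₁], [√(1−γ)·ρ₁₀, (1−γ)·ρ₁₁]] (with the real square root). Define R[ρ] = [[ρ₁₁, 0], [0, −ρ₁₁]]. Then for every fixed ρ, the map γ ↦ F(γ)[ρ] has derivative at γ = 0 equal to [[ρ₁₁, −(1/2)·ρ₀₁], [−(1/2)·ρ₁₀, −ρ₁₁]], and this derivative equals F(3/4)[ρ] + (1/4)·R[ρ] − ρ. -/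

import Mathlib

open Matrix

attribute [local instance] Matrix.normedAddCommGroup Matrix.normedSpace

/-- The single-qubit amplitude-damping channel with decay parameter `γ`. -/
noncomputable def ampDamp (γ : ℝ) (ρ : Matrix (Fin 2) (Fin 2) ℂ) :
    Matrix (Fin 2) (Fin 2) ℂ :=
  !![ρ 0 0 + (γ : ℂ) * ρ 1 1, (Real.sqrt (1 - γ) : ℂ) * ρ 0 1;
     (Real.sqrt (1 - γ) : ℂ) * ρ 1 0, ((1 - γ : ℝ) : ℂ) * ρ 1 1]

/-- The residual linear map `R`. -/
def residualMap (ρ : Matrix (Fin 2) (Fin 2) ℂ) : Matrix (Fin 2) (Fin 2) ℂ :=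
  !![ρ 1 1, 0; 0, -ρ 1 1]

lemma sqrt_deriv : HasDerivAt (fun γ : ℝ => Real.sqrt (1 - γ)) (-(1/2)) 0 := by
  have h1 : HasDerivAt (fun γ : ℝ => 1 - γ) (-1) 0 := by
    simpa using (hasDerivAt_id (0:ℝ)).const_sub 1
  have h2 : HasDerivAt Real.sqrt (1 / (2 * Real.sqrt (1 - 0))) (1 - 0) :=
    Real.hasDerivAt_sqrt (by norm_num)
  have := h2.comp 0 h1
  rw [show -(1/2:ℝ) = 1 / (2 * Real.sqrt (1 - 0)) * -1 by norm_num]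
  exact this

/-- The derivative of the amplitude-damping channel at `γ = 0` is
`[[ρ₁₁, -(1/2)ρ₀₁], [-(1/2)ρ₁₀, -ρ₁₁]]`, which equals `F(3/4)[ρ] + (1/4) R[ρ] - ρ`. -/
theorem stmt12 (ρ : Matrix (Fin 2) (Fin 2) ℂ) :
    HasDerivAt (fun γ : ℝ => ampDamp γ ρ)
        !![ρ 1 1, -(1 / 2 : ℂ) * ρ 0 1; -(1 / 2 : ℂ) * ρ 1 0, -ρ 1 1] 0 ∧
      !![ρ 1 1, -(1 / 2 : ℂ) * ρ 0 1; -(1 / 2 : ℂ) * ρ 1 0, -ρ 1 1] =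
        ampDamp (3 / 4) ρ + (1 / 4 : ℂ) • residualMap ρ - ρ := by
  constructor
  · set A : Matrix (Fin 2) (Fin 2) ℂ := !![ρ 0 0, 0; 0, ρ 1 1] with hA
    set B : Matrix (Fin 2) (Fin 2) ℂ := !![ρ 1 1, 0; 0, -ρ 1 1] with hB
    set C : Matrix (Fin 2) (Fin 2) ℂ := !![0, ρ 0 1; ρ 1 0, 0] with hC
    have key : HasDerivAt (fun γ : ℝ => A + γ • B + Real.sqrt (1 - γ) • C)
        ((0:Matrix (Fin 2) (Fin 2) ℂ) + (1:ℝ) • B + (-(1/2):ℝ) • C) 0 := by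
      exact ((hasDerivAt_const 0 A).add ((hasDerivAt_id (0:ℝ)).smul_const B)).add
        (sqrt_deriv.smul_const C)
    have heq : (fun γ : ℝ => ampDamp γ ρ) =
        fun γ : ℝ => A + γ • B + Real.sqrt (1 - γ) • C := by
      funext γ
      ext i j
      fin_cases i <;> fin_cases j <;>
        simp [ampDamp, hA, hB, hC, Matrix.smul_apply, Complex.real_smul] <;>
        push_cast <;> ring
    rw [heq]
    convert key using 1
    ext i j
    fin_cases i <;> fin_cases j <;>
      simp [hA, hB, hC, Matrix.smul_apply, Complex.real_smul] <;> push_cast <;> ring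
  · ext i j
    fin_cases i <;> fin_cases j <;>
      simp [ampDamp, residualMap, Matrix.smul_apply, Matrix.sub_apply, Matrix.add_apply,
        Real.sqrt_eq_iff_eq_sq] <;>
      (try rw [show (1:ℝ) - 3/4 = (1/2)^2 by norm_num, Real.sqrt_sq (by norm_num)]) <;>
      push_cast <;> ring
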